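/- arXiv:1812.05966 — 2 statements merged into one kernel-verified Lean document; each statement's English description precedes it below -/
import Mathlib

section
/- Let G(i) = 2i·∑_{j=2}^{i} 1/j and let S(i) = i·(4·∑_{m=2}^{i-1} (G(m)/m)/(m+1) + G(i)/i). Then the series ∑_{i=1}^{∞} S(i)/(i(i+1)(i+2)) converges to 5. -/
noncomputable def Gfun (i : ℕ) : ℝ := 2 * i * ∑ j ∈ Finset.Icc 2 i, (1 : ℝ) / j

noncomputable def Sfun (i : ℕ) : ℝ :=
  (i : ℝ) * (4 * ∑ m ∈ Finset.Icc 2 (i - 1), (Gfun m / m) / (m + 1) + Gfun i / i)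

noncomputable def Hh (k : ℕ) : ℝ := ∑ j ∈ Finset.Icc 2 k, (1 : ℝ) / j

noncomputable def Afun (k : ℕ) : ℝ := ∑ m ∈ Finset.Icc 2 k, (Gfun m / m) / (m + 1)

lemma Hh_nonneg (k : ℕ) : 0 ≤ Hh k := by
  apply Finset.sum_nonneg
  intro j hj
  positivity

lemma Gfun_eq (m : ℕ) : Gfun m = 2 * m * Hh m := rfl

lemma Gfun_div (m : ℕ) (hm : 1 ≤ m) : Gfun m / m = 2 * Hh m := by
  have : (m : ℝ) ≠ 0 := by positivity
  rw [Gfun_eq]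
  field_simp

lemma Hh_succ (k : ℕ) (hk : 1 ≤ k) : Hh (k + 1) = Hh k + 1 / ((k : ℝ) + 1) := by
  have h2 : 2 ≤ k + 1 := by omega
  rw [Hh, Hh, Finset.sum_Icc_succ_top h2]
  push_cast
  ring

lemma Afun_nonneg (k : ℕ) : 0 ≤ Afun k := by
  apply Finset.sum_nonneg
  intro m hm
  have hm1 : 1 ≤ m := by
    have := (Finset.mem_Icc.mp hm).1; omega
  rw [Gfun_div m hm1]
  have := Hh_nonneg m
  positivity

lemma Afun_succ (k : ℕ) (hk : 1 ≤ k) :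
    Afun (k + 1) = Afun k + 2 * Hh (k + 1) / ((k : ℝ) + 2) := by
  have h2 : 2 ≤ k + 1 := by omega
  rw [Afun, Afun, Finset.sum_Icc_succ_top h2, Gfun_div (k+1) (by omega)]
  push_cast
  ring

lemma Hh_le (k : ℕ) : Hh k ≤ 2 * Real.sqrt k := by
  induction k with
  | zero => simp [Hh]
  | succ n ih =>
    rcases Nat.lt_or_ge n 1 with h | h
    · interval_cases n
      · simp [Hh]
    · rw [Hh_succ n h]
      have ha : Real.sqrt n ^ 2 = (n : ℝ) := Real.sq_sqrt (by positivity)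
      have hb : Real.sqrt ((n : ℝ) + 1) ^ 2 = (n : ℝ) + 1 :=
        Real.sq_sqrt (by positivity)
      have ha0 : 0 ≤ Real.sqrt n := Real.sqrt_nonneg _
      have hb0 : 0 ≤ Real.sqrt ((n : ℝ) + 1) := Real.sqrt_nonneg _
      have hn1 : (1 : ℝ) ≤ (n : ℝ) + 1 := by
        have : (0:ℝ) ≤ n := by positivity
        linarith
      have hble : Real.sqrt ((n : ℝ) + 1) ≤ (n : ℝ) + 1 := by
        nlinarith [hb, hb0]
      have hprod : (Real.sqrt ((n:ℝ)+1) - Real.sqrt n) * (Real.sqrt ((n:ℝ)+1) + Real.sqrt n) = 1 := by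
        nlinarith [ha, hb]
      have hsumpos : 0 < Real.sqrt ((n:ℝ)+1) + Real.sqrt n := by
        have : 0 < Real.sqrt ((n:ℝ)+1) := Real.sqrt_pos.mpr (by positivity)
        linarith
      have hd : 0 < Real.sqrt ((n:ℝ)+1) - Real.sqrt n := by
        nlinarith [hprod, hsumpos]
      have hsum2 : Real.sqrt ((n:ℝ)+1) + Real.sqrt n ≤ 2 * ((n:ℝ)+1) := by
        have hmn : Real.sqrt (n:ℝ) ≤ Real.sqrt ((n:ℝ)+1) := Real.sqrt_le_sqrt (by linarith)
        linarith
      have key : 1 / ((n : ℝ) + 1) ≤ 2 * (Real.sqrt ((n:ℝ)+1) - Real.sqrt n) := by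
        rw [div_le_iff₀ (by linarith)]
        nlinarith [hprod, hsum2, hd]
      push_cast
      linarith [ih]

lemma Afun_le (k : ℕ) : Afun k ≤ 8 * Real.sqrt k := by
  induction k with
  | zero => simp [Afun]
  | succ n ih =>
    rcases Nat.lt_or_ge n 1 with h | h
    · interval_cases n
      · simp [Afun]
    · rw [Afun_succ n h]
      have ha : Real.sqrt n ^ 2 = (n : ℝ) := Real.sq_sqrt (by positivity)
      have hb : Real.sqrt ((n : ℝ) + 1) ^ 2 = (n : ℝ) + 1 :=
        Real.sq_sqrt (by positivity)
      have ha0 : 0 ≤ Real.sqrt n := Real.sqrt_nonneg _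
      have hb0 : 0 ≤ Real.sqrt ((n : ℝ) + 1) := Real.sqrt_nonneg _
      have hH : Hh (n+1) ≤ 2 * Real.sqrt ((n:ℝ)+1) := by
        have := Hh_le (n+1); push_cast at this ⊢; linarith
      have hn2 : (0:ℝ) < (n : ℝ) + 2 := by positivity
      have hab : Real.sqrt n * Real.sqrt ((n:ℝ)+1) ≤ (n:ℝ)+1 := by
        nlinarith [ha, hb, ha0, hb0, sq_nonneg (Real.sqrt n - Real.sqrt ((n:ℝ)+1))]
      have hprod : (Real.sqrt ((n:ℝ)+1) - Real.sqrt n) * (Real.sqrt ((n:ℝ)+1) + Real.sqrt n) = 1 := by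
        nlinarith [ha, hb]
      have hsumpos : 0 < Real.sqrt ((n:ℝ)+1) + Real.sqrt n := by
        have : 0 < Real.sqrt ((n:ℝ)+1) := Real.sqrt_pos.mpr (by positivity)
        linarith
      have hd : 0 < Real.sqrt ((n:ℝ)+1) - Real.sqrt n := by
        nlinarith [hprod, hsumpos]
      have hbs : Real.sqrt ((n:ℝ)+1) * (Real.sqrt ((n:ℝ)+1) + Real.sqrt n) ≤ 2 * ((n:ℝ)+2) := by
        nlinarith [hb, hab]
      have hkey0 : Real.sqrt ((n:ℝ)+1) ≤ 2 * ((n:ℝ)+2) * (Real.sqrt ((n:ℝ)+1) - Real.sqrt n) := by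
        nlinarith [hbs, hprod, hsumpos]
      have key : 2 * Hh (n+1) / ((n:ℝ)+2) ≤ 8 * (Real.sqrt ((n:ℝ)+1) - Real.sqrt n) := by
        rw [div_le_iff₀ hn2]
        nlinarith [hkey0, hH, hn2, hd]
      push_cast
      linarith [ih]

noncomputable def gterm (n : ℕ) : ℝ :=
  (4 * Afun n + 2 * Hh (n + 1)) / (((n : ℝ) + 2) * ((n : ℝ) + 3))

lemma term_eq (n : ℕ) :
    Sfun (n + 1) / (((n : ℝ) + 1) * ((n : ℝ) + 2) * ((n : ℝ) + 3)) = gterm n := by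
  have h1 : (n + 1) - 1 = n := by omega
  rw [gterm, Sfun, h1]
  rw [show (∑ m ∈ Finset.Icc 2 n, (Gfun m / m) / (m + 1)) = Afun n from rfl]
  rw [Gfun_div (n+1) (by omega)]
  have hn1 : ((n:ℝ) + 1) ≠ 0 := by positivity
  push_cast
  field_simp

lemma gterm_nonneg (n : ℕ) : 0 ≤ gterm n := by
  have h1 := Afun_nonneg n
  have h2 := Hh_nonneg (n + 1)
  rw [gterm]
  positivity

lemma psum (n : ℕ) :
    ∑ i ∈ Finset.range (n + 2), gterm i =
      5 - (4 * Afun (n+1) + 2 * Hh (n+2)) / ((n:ℝ)+4) - 2 / ((n:ℝ)+3)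
        - 8 / ((n:ℝ)+2) - 8 * Hh (n+1) / ((n:ℝ)+3) := by
  induction n with
  | zero =>
    have hA0 : Afun 0 = 0 := by simp [Afun]
    have hA1 : Afun 1 = 0 := by simp [Afun]
    have hH1 : Hh 1 = 0 := by simp [Hh]
    have hH2 : Hh 2 = 1/2 := by
      rw [Hh, Finset.Icc_self, Finset.sum_singleton]
      norm_num
    rw [Finset.sum_range_succ, Finset.sum_range_one, gterm, gterm]
    rw [hA0, hA1, hH1, hH2]
    norm_num
  | succ n ih =>
    rw [Finset.sum_range_succ, ih, gterm]
    rw [Afun_succ (n+1) (by omega), Hh_succ (n+2) (by omega), Hh_succ (n+1) (by omega)]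
    have h2 : ((n:ℝ)+2) ≠ 0 := by positivity
    have h3 : ((n:ℝ)+3) ≠ 0 := by positivity
    have h4 : ((n:ℝ)+4) ≠ 0 := by positivity
    have h5 : ((n:ℝ)+5) ≠ 0 := by positivity
    push_cast
    field_simp
    ring

lemma sqrt_shift_atTop : Filter.Tendsto (fun n : ℕ => Real.sqrt ((n:ℝ)+2))
    Filter.atTop Filter.atTop := by
  have h1 : Filter.Tendsto Real.sqrt Filter.atTop Filter.atTop := by
    apply Filter.tendsto_atTop_atTop_of_monotone
    · intro a b hab
      exact Real.sqrt_le_sqrt hab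
    · intro b
      exact ⟨b^2, by rw [Real.sqrt_sq_eq_abs]; exact le_abs_self b⟩
  have h2 : Filter.Tendsto (fun n : ℕ => (n:ℝ)+2) Filter.atTop Filter.atTop :=
    Filter.tendsto_atTop_add_const_right _ 2 tendsto_natCast_atTop_atTop
  exact h1.comp h2

lemma err_tendsto :
    Filter.Tendsto (fun n : ℕ =>
      (4 * Afun (n+1) + 2 * Hh (n+2)) / ((n:ℝ)+4) + 2 / ((n:ℝ)+3)
        + 8 / ((n:ℝ)+2) + 8 * Hh (n+1) / ((n:ℝ)+3))
      Filter.atTop (nhds 0) := by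
  have hlim : Filter.Tendsto (fun n : ℕ => (62:ℝ) / Real.sqrt ((n:ℝ)+2))
      Filter.atTop (nhds 0) :=
    Filter.Tendsto.div_atTop tendsto_const_nhds sqrt_shift_atTop
  apply squeeze_zero (g := fun n : ℕ => (62:ℝ) / Real.sqrt ((n:ℝ)+2))
  · intro n
    have h1 := Afun_nonneg (n+1)
    have h2 := Hh_nonneg (n+2)
    have h3 := Hh_nonneg (n+1)
    positivity
  · intro n
    set s := Real.sqrt ((n:ℝ)+2) with hs
    have hs2 : s ^ 2 = (n:ℝ)+2 := Real.sq_sqrt (by positivity)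
    have hs0 : 0 < s := Real.sqrt_pos.mpr (by positivity)
    have hA : Afun (n+1) ≤ 8 * s := by
      have := Afun_le (n+1)
      have hmono : Real.sqrt ((n:ℝ)+1) ≤ s :=
        Real.sqrt_le_sqrt (by linarith)
      push_cast at this
      linarith
    have hH2 : Hh (n+2) ≤ 2 * s := by
      have := Hh_le (n+2)
      push_cast at this
      linarith
    have hH1 : Hh (n+1) ≤ 2 * s := by
      have := Hh_le (n+1)
      have hmono : Real.sqrt ((n:ℝ)+1) ≤ s :=
        Real.sqrt_le_sqrt (by linarith)
      push_cast at this
      linarith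
    have e1 : (4 * Afun (n+1) + 2 * Hh (n+2)) / ((n:ℝ)+4) ≤ 36 / s := by
      rw [div_le_div_iff₀ (by positivity) hs0]
      have : (4 * Afun (n+1) + 2 * Hh (n+2)) ≤ 36 * s := by linarith
      nlinarith [hs2, hs0]
    have e2 : 2 / ((n:ℝ)+3) ≤ 2 / s := by
      apply div_le_div_of_nonneg_left (by norm_num) hs0
      nlinarith [hs2, hs0]
    have e3 : 8 / ((n:ℝ)+2) ≤ 8 / s := by
      apply div_le_div_of_nonneg_left (by norm_num) hs0
      nlinarith [hs2, hs0]
    have e4 : 8 * Hh (n+1) / ((n:ℝ)+3) ≤ 16 / s := by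
      rw [div_le_div_iff₀ (by positivity) hs0]
      nlinarith [hs2, hs0, hH1, Hh_nonneg (n+1)]
    have : (62:ℝ) / s = 36 / s + 2 / s + 8 / s + 16 / s := by ring
    rw [this]
    linarith
  · exact hlim

theorem stmt_10 :
    HasSum (fun n : ℕ =>
        Sfun (n + 1) / (((n : ℝ) + 1) * ((n : ℝ) + 2) * ((n : ℝ) + 3))) 5 := by
  have hfg : (fun n : ℕ =>
      Sfun (n + 1) / (((n : ℝ) + 1) * ((n : ℝ) + 2) * ((n : ℝ) + 3))) = gterm := by
    funext n; exact term_eq n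
  rw [hfg]
  rw [hasSum_iff_tendsto_nat_of_nonneg gterm_nonneg]
  rw [← Filter.tendsto_add_atTop_iff_nat 2]
  have : (fun n : ℕ => ∑ i ∈ Finset.range (n + 2), gterm i) =
      fun n : ℕ => 5 - ((4 * Afun (n+1) + 2 * Hh (n+2)) / ((n:ℝ)+4) + 2 / ((n:ℝ)+3)
        + 8 / ((n:ℝ)+2) + 8 * Hh (n+1) / ((n:ℝ)+3)) := by
    funext n
    rw [psum n]
    ring
  rw [this]
  have h := (tendsto_const_nhds :
      Filter.Tendsto (fun _ : ℕ => (5:ℝ)) Filter.atTop (nhds 5)).sub err_tendsto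
  simpa using h
end

section
/- For p ∈ (0,1), the identity ∑_{k=1}^{∞} (H_k)² (1−p) p^{k−1} = (1/p)·∑_{k=1}^{∞} p^{k}/k² + (log(1−p))²/p holds, where H_k = ∑_{i=1}^{k} 1/i. Equivalently, E[H_Z²] for a geometric random variable Z with P(Z=k)=(1−p)p^{k−1} equals (1/p)·∑_{k≥1} p^k/k² + (log(1−p))²/p. -/
open Finset

noncomputable def s13H (n : ℕ) : ℝ := ∑ k ∈ Finset.range n, (1:ℝ)/((k:ℝ)+1)

lemma s13H_nonneg (n : ℕ) : 0 ≤ s13H n :=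
  Finset.sum_nonneg fun k _ => by positivity

lemma s13H_le (n : ℕ) : s13H n ≤ n := by
  have : s13H n ≤ ∑ _k ∈ Finset.range n, (1:ℝ) := by
    apply Finset.sum_le_sum
    intro k _
    rw [div_le_one (by positivity)]
    have := Nat.cast_nonneg (α := ℝ) k
    linarith
  simpa using this

lemma s13H_succ (n : ℕ) : s13H (n+1) = s13H n + 1/((n:ℝ)+1) := by
  rw [s13H, Finset.sum_range_succ]; rfl

lemma s13_icc (n : ℕ) : ∑ i ∈ Finset.Icc 1 (n+1), (1:ℝ)/i = s13H (n+1) := by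
  induction n with
  | zero => simp [s13H]
  | succ n ih =>
    rw [Finset.sum_Icc_succ_top (by omega), ih, s13H_succ (n+1)]
    push_cast
    ring

lemma s13_pf (n : ℕ) : ∑ k ∈ Finset.range (n+1), (1:ℝ)/(((k:ℝ)+1)*((n:ℝ)-(k:ℝ)+1))
    = 2/((n:ℝ)+2) * s13H (n+1) := by
  have h1 : ∀ k ∈ Finset.range (n+1), (1:ℝ)/(((k:ℝ)+1)*((n:ℝ)-(k:ℝ)+1))
      = 1/((n:ℝ)+2) * (1/((k:ℝ)+1) + 1/((n:ℝ)-(k:ℝ)+1)) := by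
    intro k hk
    have hk' : (k:ℝ) ≤ n := by exact_mod_cast Nat.lt_succ_iff.mp (Finset.mem_range.mp hk)
    have h2 : (0:ℝ) < (k:ℝ)+1 := by positivity
    have h3 : (0:ℝ) < (n:ℝ)-(k:ℝ)+1 := by linarith
    have h4 : (0:ℝ) < (n:ℝ)+2 := by positivity
    field_simp
    ring
  rw [Finset.sum_congr rfl h1, ← Finset.mul_sum, Finset.sum_add_distrib]
  rw [show ∑ k ∈ Finset.range (n+1), (1:ℝ)/((k:ℝ)+1) = s13H (n+1) from rfl]
  have h4 : ∑ k ∈ Finset.range (n+1), (1:ℝ)/((n:ℝ)-(k:ℝ)+1) = s13H (n+1) := by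
    have hrefl := Finset.sum_range_reflect (fun k : ℕ => (1:ℝ)/((k:ℝ)+1)) (n+1)
    rw [s13H, ← hrefl]
    apply Finset.sum_congr rfl
    intro k hk
    have hk' : k ≤ n := Nat.lt_succ_iff.mp (Finset.mem_range.mp hk)
    have hc : ((n + 1 - 1 - k : ℕ) : ℝ) = (n:ℝ) - (k:ℝ) := by
      have : n + 1 - 1 - k = n - k := by omega
      rw [this, Nat.cast_sub hk']
    rw [hc]
  rw [h4]
  ring

set_option maxHeartbeats 1000000 in
lemma s13_cauchy (p : ℝ) (hp0 : 0 < p) (hp1 : p < 1) :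
    HasSum (fun n : ℕ => p^(n+1) * s13H (n+1) / ((n:ℝ)+2))
      (Real.log (1-p)^2 / (2*p)) := by
  have hpa : |p| < 1 := abs_lt.2 ⟨by linarith, hp1⟩
  have hL : HasSum (fun n : ℕ => p^(n+1)/((n:ℝ)+1)) (-Real.log (1-p)) :=
    Real.hasSum_pow_div_log_of_abs_lt_one hpa
  have hnn : ∀ n : ℕ, 0 ≤ p^(n+1)/((n:ℝ)+1) := fun n => by positivity
  have hprod : Summable (fun x : ℕ×ℕ => (p^(x.1+1)/((x.1:ℝ)+1)) * (p^(x.2+1)/((x.2:ℝ)+1))) :=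
    hL.summable.mul_of_nonneg hL.summable hnn hnn
  have hC : HasSum (fun x : ℕ×ℕ => (p^(x.1+1)/((x.1:ℝ)+1)) * (p^(x.2+1)/((x.2:ℝ)+1)))
      ((-Real.log (1-p)) * (-Real.log (1-p))) := hL.mul hL hprod
  have hsig := (Finset.HasAntidiagonal.sigmaAntidiagonalEquivProd (A := ℕ)).hasSum_iff.mpr hC
  have hgrp : HasSum (fun n : ℕ => ∑ kl ∈ Finset.HasAntidiagonal.antidiagonal n,
      (p^(kl.1+1)/((kl.1:ℝ)+1)) * (p^(kl.2+1)/((kl.2:ℝ)+1)))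
      ((-Real.log (1-p)) * (-Real.log (1-p))) := by
    apply hsig.sigma
    intro n
    simp only [Function.comp_apply, Finset.HasAntidiagonal.sigmaAntidiagonalEquivProd_apply]
    rw [← Finset.sum_coe_sort (Finset.HasAntidiagonal.antidiagonal n)]
    exact hasSum_fintype _
  have hfin : ∀ n : ℕ, ∑ kl ∈ Finset.HasAntidiagonal.antidiagonal n,
      (p^(kl.1+1)/((kl.1:ℝ)+1)) * (p^(kl.2+1)/((kl.2:ℝ)+1))
      = 2*p*(p^(n+1) * s13H (n+1) / ((n:ℝ)+2)) := by
    intro n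
    rw [Finset.Nat.sum_antidiagonal_eq_sum_range_succ_mk]
    have h1 : ∀ k ∈ Finset.range (n+1),
        (p^(k+1)/((k:ℝ)+1)) * (p^((n-k)+1)/(((n-k:ℕ):ℝ)+1))
        = p^(n+2) * ((1:ℝ)/(((k:ℝ)+1)*((n:ℝ)-(k:ℝ)+1))) := by
      intro k hk
      have hk' : k ≤ n := Nat.lt_succ_iff.mp (Finset.mem_range.mp hk)
      have he : (k+1) + ((n-k)+1) = n + 2 := by omega
      have hc : ((n-k:ℕ):ℝ) = (n:ℝ) - (k:ℝ) := Nat.cast_sub hk'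
      rw [hc, div_mul_div_comm, ← pow_add, he, mul_one_div]
    rw [Finset.sum_congr rfl h1, ← Finset.mul_sum, s13_pf]
    have h2 : ((n:ℝ)+2) ≠ 0 := by positivity
    field_simp
    ring
  rw [funext hfin] at hgrp
  have := hgrp.mul_left (1/(2*p))
  have hne : (2*p) ≠ 0 := by positivity
  have heq : (fun n : ℕ => (1/(2*p)) * (2*p*(p^(n+1) * s13H (n+1) / ((n:ℝ)+2))))
      = fun n : ℕ => p^(n+1) * s13H (n+1) / ((n:ℝ)+2) := by
    funext n; field_simp
  rw [heq] at this
  rw [show Real.log (1-p)^2 / (2*p) = 1/(2*p) * (-Real.log (1-p) * -Real.log (1-p)) by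
    rw [neg_mul_neg, ← sq]
    ring]
  exact this

lemma s13_U (p : ℝ) (hp0 : 0 < p) (hp1 : p < 1) :
    HasSum (fun x : ℕ×ℕ => p^(x.1+x.2+1) / (((x.1:ℝ)+1) * ((x.1:ℝ)+(x.2:ℝ)+2)))
      (Real.log (1-p)^2 / (2*p)) := by
  have hsum : Summable (fun x : ℕ×ℕ => p^(x.1+x.2+1) / (((x.1:ℝ)+1) * ((x.1:ℝ)+(x.2:ℝ)+2))) := by
    apply Summable.of_nonneg_of_le (fun x => by positivity)
      (f := fun x : ℕ×ℕ => (p^x.1) * (p^(x.2+1)))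
    · intro x
      have h1 : (1:ℝ) ≤ ((x.1:ℝ)+1) * ((x.1:ℝ)+(x.2:ℝ)+2) := by
        have h2 := Nat.cast_nonneg (α := ℝ) x.1
        have h3 := Nat.cast_nonneg (α := ℝ) x.2
        nlinarith
      calc p^(x.1+x.2+1) / (((x.1:ℝ)+1) * ((x.1:ℝ)+(x.2:ℝ)+2)) ≤ p^(x.1+x.2+1) :=
            div_le_self (by positivity) h1
        _ = p^x.1 * p^(x.2+1) := by rw [show x.1+x.2+1 = x.1+(x.2+1) from by omega, pow_add]
    · apply (summable_geometric_of_lt_one hp0.le hp1).mul_of_nonneg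
        (g := fun m : ℕ => p^(m+1))
      · have := (summable_geometric_of_lt_one hp0.le hp1).mul_right p
        apply this.congr
        intro m
        rw [pow_succ]
      · intro m; positivity
      · intro m; positivity
  have hsig := (Finset.HasAntidiagonal.sigmaAntidiagonalEquivProd (A := ℕ)).hasSum_iff.mpr hsum.hasSum
  have hgrp : HasSum (fun n : ℕ => ∑ kl ∈ Finset.HasAntidiagonal.antidiagonal n,
      p^(kl.1+kl.2+1) / (((kl.1:ℝ)+1) * ((kl.1:ℝ)+(kl.2:ℝ)+2)))
      (∑' x : ℕ×ℕ, p^(x.1+x.2+1) / (((x.1:ℝ)+1) * ((x.1:ℝ)+(x.2:ℝ)+2))) := by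
    apply hsig.sigma
    intro n
    simp only [Function.comp_apply, Finset.HasAntidiagonal.sigmaAntidiagonalEquivProd_apply]
    rw [← Finset.sum_coe_sort (Finset.HasAntidiagonal.antidiagonal n)]
    exact hasSum_fintype _
  have hfin : ∀ n : ℕ, ∑ kl ∈ Finset.HasAntidiagonal.antidiagonal n,
      p^(kl.1+kl.2+1) / (((kl.1:ℝ)+1) * ((kl.1:ℝ)+(kl.2:ℝ)+2))
      = p^(n+1) * s13H (n+1) / ((n:ℝ)+2) := by
    intro n
    rw [Finset.Nat.sum_antidiagonal_eq_sum_range_succ_mk]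
    have h1 : ∀ k ∈ Finset.range (n+1),
        p^(k+(n-k)+1) / (((k:ℝ)+1) * ((k:ℝ)+((n-k:ℕ):ℝ)+2))
        = p^(n+1)/((n:ℝ)+2) * ((1:ℝ)/((k:ℝ)+1)) := by
      intro k hk
      have hk' : k ≤ n := Nat.lt_succ_iff.mp (Finset.mem_range.mp hk)
      have he : k+(n-k)+1 = n+1 := by omega
      have hc : ((n-k:ℕ):ℝ) = (n:ℝ) - (k:ℝ) := Nat.cast_sub hk'
      rw [he, hc]
      have h2 : (k:ℝ) + ((n:ℝ)-(k:ℝ)) + 2 = (n:ℝ)+2 := by ring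
      rw [h2]
      have h3 : ((k:ℝ)+1) ≠ 0 := by positivity
      have h4 : ((n:ℝ)+2) ≠ 0 := by positivity
      field_simp
    rw [Finset.sum_congr rfl h1, ← Finset.mul_sum, ← s13H]
    ring
  rw [funext hfin] at hgrp
  have := (s13_cauchy p hp0 hp1).unique hgrp
  rw [this]
  exact hsum.hasSum

lemma s13_diag (p : ℝ) (hp0 : 0 < p) (hp1 : p < 1) :
    HasSum (fun k : ℕ => p^k/((k:ℝ)+1)^2) ((1/p) * ∑' k : ℕ, p^(k+1)/((k:ℝ)+1)^2) := by
  have hpne : p ≠ 0 := ne_of_gt hp0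
  have hs : Summable (fun k : ℕ => p^(k+1)/((k:ℝ)+1)^2) := by
    apply Summable.of_nonneg_of_le (fun k => by positivity)
      (f := fun k : ℕ => p^k * p)
    · intro k
      calc p^(k+1)/((k:ℝ)+1)^2 ≤ p^(k+1) :=
            div_le_self (by positivity) (by nlinarith [Nat.cast_nonneg (α := ℝ) k])
        _ = p^k * p := pow_succ p k
    · exact (summable_geometric_of_lt_one hp0.le hp1).mul_right p
  have h := hs.hasSum.mul_left (1/p)
  have heq : (fun k : ℕ => (1/p) * (p^(k+1)/((k:ℝ)+1)^2)) = fun k : ℕ => p^k/((k:ℝ)+1)^2 := by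
    funext k
    rw [pow_succ]
    have : ((k:ℝ)+1)^2 ≠ 0 := by positivity
    field_simp
  rwa [heq] at h

lemma s13_g (p : ℝ) (hp0 : 0 < p) (hp1 : p < 1) :
    HasSum (fun x : ℕ×ℕ => p ^ (max x.1 x.2) / (((x.1:ℝ)+1)*((x.2:ℝ)+1)))
      ((1/p) * ∑' k : ℕ, p^(k+1)/((k:ℝ)+1)^2
        + Real.log (1-p)^2/(2*p) + Real.log (1-p)^2/(2*p)) := by
  set g : ℕ×ℕ → ℝ := fun x => p ^ (max x.1 x.2) / (((x.1:ℝ)+1)*((x.2:ℝ)+1)) with hgdef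
  have hdiag : HasSum (Set.indicator {x : ℕ×ℕ | x.1 = x.2} g)
      ((1/p) * ∑' k : ℕ, p^(k+1)/((k:ℝ)+1)^2) := by
    have hinj : Function.Injective (fun i : ℕ => ((i, i) : ℕ×ℕ)) := by
      intro a b h
      exact congrArg Prod.fst h
    have hsupp : ∀ x ∉ Set.range (fun i : ℕ => ((i, i) : ℕ×ℕ)),
        Set.indicator {x : ℕ×ℕ | x.1 = x.2} g x = 0 := by
      intro x hx
      apply Set.indicator_of_notMem
      intro hmem
      simp only [Set.mem_setOf_eq] at hmem
      exact hx ⟨x.1, by obtain ⟨a, b⟩ := x; simp only at hmem ⊢; simp [hmem]⟩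
    rw [← Function.Injective.hasSum_iff hinj hsupp]
    have hcomp : (Set.indicator {x : ℕ×ℕ | x.1 = x.2} g ∘ fun i : ℕ => ((i, i) : ℕ×ℕ))
        = fun k : ℕ => p^k/((k:ℝ)+1)^2 := by
      funext i
      simp only [Function.comp_apply]
      rw [Set.indicator_of_mem (by simp : ((i,i) : ℕ×ℕ) ∈ {x : ℕ×ℕ | x.1 = x.2})]
      simp only [hgdef, max_self]
      rw [sq]
    rw [hcomp]
    exact s13_diag p hp0 hp1
  have hlt : HasSum (Set.indicator {x : ℕ×ℕ | x.1 < x.2} g)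
      (Real.log (1-p)^2/(2*p)) := by
    have hinj : Function.Injective (fun y : ℕ×ℕ => ((y.1, y.1 + y.2 + 1) : ℕ×ℕ)) := by
      intro a b h
      have h1 := congrArg Prod.fst h
      have h2 := congrArg Prod.snd h
      simp only at h1 h2
      obtain ⟨a1, a2⟩ := a; obtain ⟨b1, b2⟩ := b
      simp only [Prod.mk.injEq] at h1 h2 ⊢
      omega
    have hsupp : ∀ x ∉ Set.range (fun y : ℕ×ℕ => ((y.1, y.1 + y.2 + 1) : ℕ×ℕ)),
        Set.indicator {x : ℕ×ℕ | x.1 < x.2} g x = 0 := by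
      intro x hx
      apply Set.indicator_of_notMem
      intro hmem
      simp only [Set.mem_setOf_eq] at hmem
      refine hx ⟨(x.1, x.2 - x.1 - 1), ?_⟩
      obtain ⟨a, b⟩ := x
      simp only at hmem ⊢
      refine Prod.ext rfl ?_
      simp only
      omega
    rw [← Function.Injective.hasSum_iff hinj hsupp]
    have hcomp : (Set.indicator {x : ℕ×ℕ | x.1 < x.2} g ∘
        fun y : ℕ×ℕ => ((y.1, y.1 + y.2 + 1) : ℕ×ℕ))
        = fun y : ℕ×ℕ => p^(y.1+y.2+1) / (((y.1:ℝ)+1) * ((y.1:ℝ)+(y.2:ℝ)+2)) := by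
      funext y
      simp only [Function.comp_apply]
      rw [Set.indicator_of_mem (by simp only [Set.mem_setOf_eq]; omega :
        ((y.1, y.1+y.2+1) : ℕ×ℕ) ∈ {x : ℕ×ℕ | x.1 < x.2})]
      simp only [hgdef]
      rw [max_eq_right (by omega)]
      push_cast
      ring_nf
    rw [hcomp]
    exact s13_U p hp0 hp1
  have hgt : HasSum (Set.indicator {x : ℕ×ℕ | x.2 < x.1} g)
      (Real.log (1-p)^2/(2*p)) := by
    have hinj : Function.Injective (fun y : ℕ×ℕ => ((y.1 + y.2 + 1, y.1) : ℕ×ℕ)) := by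
      intro a b h
      have h1 := congrArg Prod.fst h
      have h2 := congrArg Prod.snd h
      simp only at h1 h2
      obtain ⟨a1, a2⟩ := a; obtain ⟨b1, b2⟩ := b
      simp only [Prod.mk.injEq] at h1 h2 ⊢
      omega
    have hsupp : ∀ x ∉ Set.range (fun y : ℕ×ℕ => ((y.1 + y.2 + 1, y.1) : ℕ×ℕ)),
        Set.indicator {x : ℕ×ℕ | x.2 < x.1} g x = 0 := by
      intro x hx
      apply Set.indicator_of_notMem
      intro hmem
      simp only [Set.mem_setOf_eq] at hmem
      refine hx ⟨(x.2, x.1 - x.2 - 1), ?_⟩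
      obtain ⟨a, b⟩ := x
      simp only at hmem ⊢
      refine Prod.ext ?_ rfl
      simp only
      omega
    rw [← Function.Injective.hasSum_iff hinj hsupp]
    have hcomp : (Set.indicator {x : ℕ×ℕ | x.2 < x.1} g ∘
        fun y : ℕ×ℕ => ((y.1 + y.2 + 1, y.1) : ℕ×ℕ))
        = fun y : ℕ×ℕ => p^(y.1+y.2+1) / (((y.1:ℝ)+1) * ((y.1:ℝ)+(y.2:ℝ)+2)) := by
      funext y
      simp only [Function.comp_apply]
      rw [Set.indicator_of_mem (by simp only [Set.mem_setOf_eq]; omega :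
        ((y.1+y.2+1, y.1) : ℕ×ℕ) ∈ {x : ℕ×ℕ | x.2 < x.1})]
      simp only [hgdef]
      rw [max_eq_left (by omega)]
      push_cast
      ring_nf
    rw [hcomp]
    exact s13_U p hp0 hp1
  have hsum3 := (hdiag.add hlt).add hgt
  have hpt : ∀ x : ℕ×ℕ, Set.indicator {x : ℕ×ℕ | x.1 = x.2} g x
      + Set.indicator {x : ℕ×ℕ | x.1 < x.2} g x
      + Set.indicator {x : ℕ×ℕ | x.2 < x.1} g x = g x := by
    intro x
    rcases lt_trichotomy x.1 x.2 with h|h|h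
    · rw [Set.indicator_of_notMem (by simp only [Set.mem_setOf_eq]; omega),
        Set.indicator_of_mem (by simp only [Set.mem_setOf_eq]; omega :
          x ∈ {x : ℕ×ℕ | x.1 < x.2}),
        Set.indicator_of_notMem (by simp only [Set.mem_setOf_eq]; omega)]
      ring
    · rw [Set.indicator_of_mem (by simp only [Set.mem_setOf_eq]; omega :
          x ∈ {x : ℕ×ℕ | x.1 = x.2}),
        Set.indicator_of_notMem (by simp only [Set.mem_setOf_eq]; omega),
        Set.indicator_of_notMem (by simp only [Set.mem_setOf_eq]; omega)]
      ring
    · rw [Set.indicator_of_notMem (by simp only [Set.mem_setOf_eq]; omega),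
        Set.indicator_of_notMem (by simp only [Set.mem_setOf_eq]; omega),
        Set.indicator_of_mem (by simp only [Set.mem_setOf_eq]; omega :
          x ∈ {x : ℕ×ℕ | x.2 < x.1})]
      ring
  rwa [funext hpt] at hsum3

lemma s13_outer (p : ℝ) (hp0 : 0 < p) (hp1 : p < 1) :
    HasSum (fun n : ℕ => s13H (n+1)^2 * (1-p) * p^n)
      ((1/p) * ∑' k : ℕ, p^(k+1)/((k:ℝ)+1)^2
        + Real.log (1-p)^2/(2*p) + Real.log (1-p)^2/(2*p)) := by
  have h1p : (0:ℝ) < 1 - p := by linarith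
  have h1pne : (1:ℝ) - p ≠ 0 := ne_of_gt h1p
  set F : ℕ × (ℕ×ℕ) → ℝ := fun q =>
    if max q.2.1 q.2.2 ≤ q.1 then (1-p) * p^q.1 / (((q.2.1:ℝ)+1)*((q.2.2:ℝ)+1)) else 0
    with hFdef
  have hFnn : 0 ≤ F := by
    intro q
    simp only [hFdef]
    split
    · apply div_nonneg (mul_nonneg h1p.le (by positivity)) (by positivity)
    · exact le_refl 0
  have hrow : ∀ n : ℕ, HasSum (fun x : ℕ×ℕ => F (n, x)) (s13H (n+1)^2 * (1-p) * p^n) := by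
    intro n
    have hsupp : ∀ x ∉ Finset.range (n+1) ×ˢ Finset.range (n+1), F (n, x) = 0 := by
      intro x hx
      simp only [Finset.mem_product, Finset.mem_range] at hx
      simp only [hFdef]
      rw [if_neg (by omega)]
    have hval : ∑ x ∈ Finset.range (n+1) ×ˢ Finset.range (n+1), F (n, x)
        = s13H (n+1)^2 * (1-p) * p^n := by
      rw [Finset.sum_product]
      have h1 : ∀ i ∈ Finset.range (n+1), ∀ j ∈ Finset.range (n+1),
          F (n, (i, j)) = (1/((i:ℝ)+1)) * ((1/((j:ℝ)+1)) * ((1-p)*p^n)) := by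
        intro i hi j hj
        simp only [Finset.mem_range] at hi hj
        simp only [hFdef]
        rw [if_pos (by omega)]
        have h2 : ((i:ℝ)+1) ≠ 0 := by positivity
        have h3 : ((j:ℝ)+1) ≠ 0 := by positivity
        field_simp
      rw [Finset.sum_congr rfl (fun i hi => Finset.sum_congr rfl (fun j hj => h1 i hi j hj))]
      simp only [← Finset.mul_sum]
      rw [← Finset.sum_mul, ← Finset.sum_mul]
      have hS : ∑ j ∈ Finset.range (n+1), (1:ℝ)/((j:ℝ)+1) = s13H (n+1) := rfl
      rw [hS]
      ring
    rw [← hval]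
    exact hasSum_sum_of_ne_finset_zero hsupp
  have hcol : ∀ x : ℕ×ℕ, HasSum (fun n : ℕ => F (n, x))
      (p ^ (max x.1 x.2) / (((x.1:ℝ)+1)*((x.2:ℝ)+1))) := by
    intro x
    set M := max x.1 x.2 with hM
    set c : ℝ := (1-p) * p^M / (((x.1:ℝ)+1)*((x.2:ℝ)+1)) with hc
    have hinj : Function.Injective (fun m : ℕ => m + M) := add_left_injective M
    have hsupp : ∀ n ∉ Set.range (fun m : ℕ => m + M), F (n, x) = 0 := by
      intro n hn
      have hlt : n < M := by
        by_contra hcon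
        push_neg at hcon
        exact hn ⟨n - M, by show n - M + M = n; omega⟩
      simp only [hFdef]
      rw [if_neg (by omega)]
    have hgeo := (hasSum_geometric_of_lt_one hp0.le hp1).mul_left c
    have hcomp : ((fun n : ℕ => F (n, x)) ∘ fun m : ℕ => m + M) = fun m : ℕ => c * p^m := by
      funext m
      simp only [Function.comp_apply, hFdef, hc]
      rw [if_pos (by omega : max x.1 x.2 ≤ m + M)]
      rw [pow_add]
      ring
    have hval : c * (1-p)⁻¹ = p ^ M / (((x.1:ℝ)+1)*((x.2:ℝ)+1)) := by
      rw [hc]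
      field_simp
    rw [← hcomp, hval] at hgeo
    exact (Function.Injective.hasSum_iff hinj hsupp).mp hgeo
  have hpa : ‖p‖ < 1 := by rw [Real.norm_eq_abs, abs_lt]; constructor <;> linarith
  have hrowsummable : Summable (fun n : ℕ => s13H (n+1)^2 * (1-p) * p^n) := by
    have hs2 := summable_pow_mul_geometric_of_norm_lt_one 2 hpa
    have hs1 := summable_pow_mul_geometric_of_norm_lt_one 1 hpa
    have hs0 := summable_geometric_of_lt_one hp0.le hp1
    have hbnd : Summable (fun n : ℕ => ((n:ℝ)+1)^2 * p^n) := by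
      apply Summable.congr ((hs2.add (hs1.mul_left 2)).add hs0)
      intro n
      ring
    apply Summable.of_nonneg_of_le ?_ ?_ hbnd
    · intro n
      have := s13H_nonneg (n+1)
      have : (0:ℝ) ≤ p^n := by positivity
      positivity
    · intro n
      have h1 : s13H (n+1) ≤ (n:ℝ)+1 := by
        have := s13H_le (n+1)
        push_cast at this
        linarith
      have h2 := s13H_nonneg (n+1)
      have h3 : (0:ℝ) ≤ p^n := by positivity
      have h5 : s13H (n+1)^2 ≤ ((n:ℝ)+1)^2 := by nlinarith
      have h6 : s13H (n+1)^2 * (1-p) ≤ s13H (n+1)^2 := by nlinarith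
      calc s13H (n+1)^2 * (1-p) * p^n ≤ s13H (n+1)^2 * p^n := by nlinarith
        _ ≤ ((n:ℝ)+1)^2 * p^n := by nlinarith
  have hFs : Summable F := by
    rw [summable_prod_of_nonneg hFnn]
    constructor
    · intro n
      exact (hrow n).summable
    · have heq : (fun n : ℕ => ∑' x : ℕ×ℕ, F (n, x))
          = fun n : ℕ => s13H (n+1)^2 * (1-p) * p^n := funext fun n => (hrow n).tsum_eq
      rw [heq]
      exact hrowsummable
  have hFtot := hFs.hasSum
  have hrows := hFtot.prod_fiberwise hrow
  have hswap : HasSum (F ∘ (Equiv.prodComm (ℕ×ℕ) ℕ)) (∑' q, F q) :=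
    (Equiv.prodComm (ℕ×ℕ) ℕ).hasSum_iff.mpr hFtot
  have hcols : HasSum (fun x : ℕ×ℕ => p ^ (max x.1 x.2) / (((x.1:ℝ)+1)*((x.2:ℝ)+1)))
      (∑' q, F q) := hswap.prod_fiberwise (fun x => hcol x)
  have hval := hcols.unique (s13_g p hp0 hp1)
  rwa [hval] at hrows

theorem stmt_13 (p : ℝ) (hp : p ∈ Set.Ioo (0 : ℝ) 1) :
    HasSum (fun n : ℕ =>
        (∑ i ∈ Finset.Icc 1 (n + 1), (1 : ℝ) / i) ^ 2 * (1 - p) * p ^ n)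
      ((1 / p) * ∑' k : ℕ, p ^ (k + 1) / ((k : ℝ) + 1) ^ 2 +
        (Real.log (1 - p)) ^ 2 / p) := by
  obtain ⟨hp0, hp1⟩ := hp
  have hpne : p ≠ 0 := ne_of_gt hp0
  have hfun : (fun n : ℕ => (∑ i ∈ Finset.Icc 1 (n + 1), (1 : ℝ) / i) ^ 2 * (1-p) * p^n)
      = fun n : ℕ => s13H (n+1)^2 * (1-p) * p^n := funext fun n => by rw [s13_icc]
  rw [hfun]
  have h := s13_outer p hp0 hp1
  convert h using 1
  have : Real.log (1-p)^2/p = Real.log (1-p)^2/(2*p) + Real.log (1-p)^2/(2*p) := by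
    field_simp
    ring
  rw [this]
  ring
end
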